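/- Let (E, E₊, θ) be a reflection positive Hilbert space and D ⊆ E₀ = {v ∈ E₊ : θv = v} a subspace whose image q(D) is dense in Ê. Then q(E₀) = Ê and N = E₊ ∩ E₀^⊥, where N = {v ∈ E₊ : ⟨θv,v⟩ = 0}. -/

import Mathlib

local notation "⟪" x ", " y "⟫" => @inner ℂ _ _ x y

section aux

variable {E : Type*} [NormedAddCommGroup E] [InnerProductSpace ℂ E]

lemma aux_herm (θ : E ≃ₗᵢ[ℂ] E) (hθinv : ∀ v : E, θ (θ v) = v) (u v : E) :
    ⟪θ u, v⟫ = starRingEnd ℂ ⟪θ v, u⟫ := by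
  have h : ⟪θ u, v⟫ = ⟪θ (θ u), θ v⟫ := (θ.inner_map_map (θ u) v).symm
  rw [h, hθinv, ← inner_conj_symm]

variable (θ : E ≃ₗᵢ[ℂ] E) (hθinv : ∀ v : E, θ (θ v) = v)
  (Eplus : Submodule ℂ E)
  (hpos : ∀ v ∈ Eplus, ∃ r : ℝ, 0 ≤ r ∧ ⟪θ v, v⟫ = (r : ℂ))

include hpos in
lemma aux_real {v : E} (hv : v ∈ Eplus) :
    ⟪θ v, v⟫ = ((⟪θ v, v⟫).re : ℂ) ∧ 0 ≤ (⟪θ v, v⟫).re := by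
  obtain ⟨r, hr, h⟩ := hpos v hv
  rw [h]; simp [hr]

noncomputable def auxCore : PreInnerProductSpace.Core ℂ ↥Eplus where
  inner := fun x y => ⟪θ x.1, y.1⟫
  conj_inner_symm := fun x y => (aux_herm θ hθinv x.1 y.1).symm
  re_inner_nonneg := fun x => (aux_real θ Eplus hpos x.2).2
  add_left := by intro x y z; simp [inner_add_left]
  smul_left := by intro x y r; simp [inner_smul_left]; ring

include hθinv hpos in
lemma aux_cs {u v : E} (hu : u ∈ Eplus) (hv : v ∈ Eplus) :
    ‖⟪θ u, v⟫‖ ≤ Real.sqrt (⟪θ u, u⟫).re * Real.sqrt (⟪θ v, v⟫).re := by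
  letI c := auxCore θ hθinv Eplus hpos
  have h := @InnerProductSpace.Core.inner_mul_inner_self_le ℂ ↥Eplus _ _ _ c ⟨u, hu⟩ ⟨v, hv⟩
  have hsym : ‖(c.inner ⟨v, hv⟩ ⟨u, hu⟩ : ℂ)‖ = ‖(c.inner ⟨u, hu⟩ ⟨v, hv⟩ : ℂ)‖ := by
    rw [← c.conj_inner_symm]; exact RCLike.norm_conj _
  have h2 : ‖⟪θ u, v⟫‖ * ‖⟪θ u, v⟫‖ ≤ (⟪θ u, u⟫).re * (⟪θ v, v⟫).re := by
    calc ‖⟪θ u, v⟫‖ * ‖⟪θ u, v⟫‖ = ‖(c.inner ⟨u,hu⟩ ⟨v,hv⟩ : ℂ)‖ * ‖(c.inner ⟨v,hv⟩ ⟨u,hu⟩ : ℂ)‖ := by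
          rw [hsym]; rfl
      _ ≤ _ := h
  have ha := (aux_real θ Eplus hpos hu).2
  have hb := (aux_real θ Eplus hpos hv).2
  rw [← Real.sqrt_mul ha]
  exact Real.le_sqrt_of_sq_le (by nlinarith [norm_nonneg (⟪θ u, v⟫)])

include hθinv hpos in
lemma aux_tri {x y : E} (hx : x ∈ Eplus) (hy : y ∈ Eplus) :
    Real.sqrt (⟪θ (x + y), x + y⟫).re ≤
      Real.sqrt (⟪θ x, x⟫).re + Real.sqrt (⟪θ y, y⟫).re := by
  have ha := (aux_real θ Eplus hpos hx).2
  have hb := (aux_real θ Eplus hpos hy).2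
  have hexp : (⟪θ (x + y), x + y⟫).re
      = (⟪θ x, x⟫).re + 2 * (⟪θ x, y⟫).re + (⟪θ y, y⟫).re := by
    have h1 : ⟪θ (x + y), x + y⟫ = ⟪θ x, x⟫ + ⟪θ x, y⟫ + ⟪θ y, x⟫ + ⟪θ y, y⟫ := by
      rw [map_add]
      simp [inner_add_left, inner_add_right]; ring
    have h2 : (⟪θ y, x⟫).re = (⟪θ x, y⟫).re := by
      rw [aux_herm θ hθinv y x]; exact Complex.conj_re _
    rw [h1]; simp [h2]; ring
  have hcs := aux_cs θ hθinv Eplus hpos hx hy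
  have hre : (⟪θ x, y⟫).re ≤ Real.sqrt (⟪θ x, x⟫).re * Real.sqrt (⟪θ y, y⟫).re :=
    le_trans (Complex.re_le_norm _) hcs
  have hle : (⟪θ (x + y), x + y⟫).re
      ≤ (Real.sqrt (⟪θ x, x⟫).re + Real.sqrt (⟪θ y, y⟫).re) ^ 2 := by
    rw [hexp]
    nlinarith [Real.sq_sqrt ha, Real.sq_sqrt hb]
  calc Real.sqrt (⟪θ (x + y), x + y⟫).re
      ≤ Real.sqrt ((Real.sqrt (⟪θ x, x⟫).re + Real.sqrt (⟪θ y, y⟫).re) ^ 2) :=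
        Real.sqrt_le_sqrt hle
    _ = _ := Real.sqrt_sq (by positivity)

lemma aux_neg (θ' : E ≃ₗᵢ[ℂ] E) (x : E) : ⟪θ' (-x), -x⟫ = ⟪θ' x, x⟫ := by
  rw [map_neg]; simp


include hθinv hpos in
theorem aux_part1
    (hclosed : IsClosed (Eplus : Set E)) [CompleteSpace E]
    (D : Submodule ℂ E) (hD : ∀ v ∈ D, v ∈ Eplus ∧ θ v = v)
    (hdense : ∀ w ∈ Eplus, ∀ ε : ℝ, 0 < ε → ∃ d ∈ D, (⟪θ (w - d), w - d⟫).re < ε) :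
    ∀ w ∈ Eplus, ∃ v ∈ Eplus, θ v = v ∧ ⟪θ (w - v), w - v⟫ = (0 : ℂ) := by
  intro w hw
  have hpos01 : ∀ n : ℕ, (0:ℝ) < 1 / (n + 1) := by intro n; positivity
  choose d hdD hdlt using fun n : ℕ => hdense w hw (1 / (n + 1)) (hpos01 n)
  have hdE : ∀ n, d n ∈ Eplus := fun n => (hD _ (hdD n)).1
  have hdθ : ∀ n, θ (d n) = d n := fun n => (hD _ (hdD n)).2
  -- distance between elements of E₀ equals the seminorm
  have hnorm_sq : ∀ n m : ℕ, ‖d n - d m‖ = Real.sqrt (⟪θ (d n - d m), d n - d m⟫).re := by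
    intro n m
    have hfix : θ (d n - d m) = d n - d m := by rw [map_sub, hdθ, hdθ]
    rw [hfix]
    have h := inner_self_eq_norm_sq_to_K (𝕜 := ℂ) (d n - d m)
    have h2 : (⟪d n - d m, d n - d m⟫).re = ‖d n - d m‖ ^ 2 := by rw [h]; norm_cast
    rw [h2, Real.sqrt_sq (norm_nonneg _)]
  have hb_bound : ∀ n m N : ℕ, N ≤ n → N ≤ m →
      dist (d n) (d m) ≤ 2 * Real.sqrt (1 / (N + 1)) := by
    intro n m N hn hm
    rw [dist_eq_norm, hnorm_sq n m]
    have hsplit : d n - d m = (d n - w) + (w - d m) := by abel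
    have htri := aux_tri θ hθinv Eplus hpos
      (Eplus.sub_mem (hdE n) hw) (Eplus.sub_mem hw (hdE m))
    rw [hsplit]
    have h1 : (⟪θ (d n - w), d n - w⟫).re = (⟪θ (w - d n), w - d n⟫).re := by
      have : d n - w = -(w - d n) := by abel
      rw [this, aux_neg θ]
    have hmono : ∀ k : ℕ, N ≤ k → Real.sqrt (⟪θ (w - d k), w - d k⟫).re
        ≤ Real.sqrt (1 / (N + 1)) := by
      intro k hk
      apply Real.sqrt_le_sqrt
      have : (1:ℝ) / (k + 1) ≤ 1 / (N + 1) := by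
        apply one_div_le_one_div_of_le (by positivity)
        exact_mod_cast by omega
      linarith [hdlt k]
    calc Real.sqrt (⟪θ ((d n - w) + (w - d m)), (d n - w) + (w - d m)⟫).re
        ≤ Real.sqrt (⟪θ (d n - w), d n - w⟫).re
          + Real.sqrt (⟪θ (w - d m), w - d m⟫).re := htri
      _ = Real.sqrt (⟪θ (w - d n), w - d n⟫).re
          + Real.sqrt (⟪θ (w - d m), w - d m⟫).re := by rw [h1]
      _ ≤ Real.sqrt (1 / (N + 1)) + Real.sqrt (1 / (N + 1)) :=
          add_le_add (hmono n hn) (hmono m hm)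
      _ = 2 * Real.sqrt (1 / (N + 1)) := by ring
  have hb_tendsto : Filter.Tendsto (fun N : ℕ => 2 * Real.sqrt (1 / (N + 1)))
      Filter.atTop (nhds 0) := by
    have h0 : Filter.Tendsto (fun N : ℕ => 1 / ((N:ℝ) + 1)) Filter.atTop (nhds 0) :=
      tendsto_one_div_add_atTop_nhds_zero_nat
    have h1 : Filter.Tendsto (fun N : ℕ => Real.sqrt (1 / ((N:ℝ) + 1)))
        Filter.atTop (nhds 0) := by
      have := h0.sqrt
      simpa using this
    simpa using h1.const_mul 2
  have hcauchy : CauchySeq d := cauchySeq_of_le_tendsto_0 _ hb_bound hb_tendsto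
  obtain ⟨v, hv⟩ := cauchySeq_tendsto_of_complete hcauchy
  have hvE : v ∈ Eplus := hclosed.mem_of_tendsto hv (Filter.Eventually.of_forall hdE)
  have hvθ : θ v = v := by
    have h1 : Filter.Tendsto (fun n => θ (d n)) Filter.atTop (nhds (θ v)) :=
      (θ.continuous.tendsto v).comp hv
    have h2 : Filter.Tendsto (fun n => θ (d n)) Filter.atTop (nhds v) := by
      simpa [hdθ] using hv
    exact tendsto_nhds_unique h1 h2
  refine ⟨v, hvE, hvθ, ?_⟩
  have hgcont : Continuous fun x : E => (⟪θ (w - x), w - x⟫).re := by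
    have hc : Continuous fun x : E => w - x := continuous_const.sub continuous_id
    exact Complex.continuous_re.comp (Continuous.inner (θ.continuous.comp hc) hc)
  have hgd : Filter.Tendsto (fun n => (⟪θ (w - d n), w - d n⟫).re)
      Filter.atTop (nhds (⟪θ (w - v), w - v⟫).re) := (hgcont.tendsto v).comp hv
  have hgd0 : Filter.Tendsto (fun n => (⟪θ (w - d n), w - d n⟫).re)
      Filter.atTop (nhds 0) := by
    apply squeeze_zero (fun n => (aux_real θ Eplus hpos (Eplus.sub_mem hw (hdE n))).2)
      (fun n => le_of_lt (hdlt n))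
    exact tendsto_one_div_add_atTop_nhds_zero_nat
  have hre0 : (⟪θ (w - v), w - v⟫).re = 0 := tendsto_nhds_unique hgd hgd0
  have := (aux_real θ Eplus hpos (Eplus.sub_mem hw hvE)).1
  rw [hre0] at this
  simpa using this

end aux


/-- Let `(E, E₊, θ)` be a reflection positive Hilbert space and `D ⊆ E₀` a subspace whose
image `q(D)` is dense in `Ê` (expressed via the seminorm `‖q(v)‖² = re⟨θv,v⟩`).  Then
`q(E₀) = Ê` (every `q(w)`, `w ∈ E₊`, equals `q(v)` for some `v ∈ E₀`) and
`N = {v ∈ E₊ : ⟨θv,v⟩ = 0}` equals `E₊ ∩ E₀^⊥`. -/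
theorem statement7
    {E : Type*} [NormedAddCommGroup E] [InnerProductSpace ℂ E] [CompleteSpace E]
    (θ : E ≃ₗᵢ[ℂ] E) (hθinv : ∀ v : E, θ (θ v) = v)
    (Eplus : Submodule ℂ E) (hclosed : IsClosed (Eplus : Set E))
    (hpos : ∀ v ∈ Eplus, ∃ r : ℝ, 0 ≤ r ∧ ⟪θ v, v⟫ = (r : ℂ))
    (D : Submodule ℂ E) (hD : ∀ v ∈ D, v ∈ Eplus ∧ θ v = v)
    (hdense : ∀ w ∈ Eplus, ∀ ε : ℝ, 0 < ε → ∃ d ∈ D, (⟪θ (w - d), w - d⟫).re < ε) :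
    (∀ w ∈ Eplus, ∃ v ∈ Eplus, θ v = v ∧ ⟪θ (w - v), w - v⟫ = (0 : ℂ)) ∧
    {v : E | v ∈ Eplus ∧ ⟪θ v, v⟫ = (0 : ℂ)} =
      {v : E | v ∈ Eplus ∧ ∀ u : E, u ∈ Eplus → θ u = u → ⟪u, v⟫ = (0 : ℂ)} := by
  have part1 := aux_part1 θ hθinv Eplus hpos hclosed D hD hdense
  refine ⟨part1, ?_⟩
  ext v
  simp only [Set.mem_setOf_eq]
  constructor
  · rintro ⟨hvE, hv0⟩
    refine ⟨hvE, fun u huE huθ => ?_⟩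
    have hcs := aux_cs θ hθinv Eplus hpos huE hvE
    rw [hv0] at hcs
    simp only [Complex.zero_re, Real.sqrt_zero, mul_zero] at hcs
    have : ⟪θ u, v⟫ = 0 := norm_le_zero_iff.mp hcs
    rwa [huθ] at this
  · rintro ⟨hvE, hortho⟩
    refine ⟨hvE, ?_⟩
    obtain ⟨u, huE, huθ, hu0⟩ := part1 v hvE
    have h1 : ⟪θ v, v - u⟫ = 0 := by
      have hcs := aux_cs θ hθinv Eplus hpos hvE (Eplus.sub_mem hvE huE)
      rw [hu0] at hcs
      simp only [Complex.zero_re, Real.sqrt_zero, mul_zero] at hcs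
      exact norm_le_zero_iff.mp hcs
    have h2 : ⟪θ v, u⟫ = 0 := by
      rw [aux_herm θ hθinv v u, huθ, hortho u huE huθ]
      simp
    calc ⟪θ v, v⟫ = ⟪θ v, (v - u) + u⟫ := by congr 1; abel
      _ = ⟪θ v, v - u⟫ + ⟪θ v, u⟫ := inner_add_right _ _ _
      _ = 0 := by rw [h1, h2, add_zero]
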